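/- Let (i_n) ∈ {-1,0,1}^ℕ satisfy i_1 = ⋯ = i_{k-1} = 0 and i_k = 1 for some k ≥ 3 (equivalently 0^∞ ≺ (i_n) ≼ 001^∞ in lexicographic order). Then the function λ ↦ (1-λ)·∑_{n≥1} i_n·λ^{n-1} is strictly increasing on (0, 1/3]. -/

import Mathlib

open scoped Pointwise

/-- `PiFun i λ = (1-λ) ∑_{n≥0} i_n λ^n`, the series Π from the paper (0-based indexing). -/
noncomputable def PiFun (i : ℕ → ℝ) (l : ℝ) : ℝ := (1 - l) * ∑' n : ℕ, i n * l ^ n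

/-- `i` is a sequence over the alphabet `{-1,0,1}`. -/
def IsCoding (i : ℕ → ℝ) : Prop := ∀ n, i n = -1 ∨ i n = 0 ∨ i n = 1

/-- Strict lexicographic order on sequences. -/
def LexLt (i j : ℕ → ℝ) : Prop := ∃ m, (∀ n, n < m → i n = j n) ∧ i m < j m

/-- Non-strict lexicographic order on sequences. -/
def LexLe (i j : ℕ → ℝ) : Prop := LexLt i j ∨ i = j

-- `rho i j = 3^{-k}` where `k` is the first (0-based) index at which the sequences differ
-- (this equals `3^{1-k}` for 1-based indexing as in the paper).
open Classical in
noncomputable def rho (i j : ℕ → ℝ) : ℝ :=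
  if i = j then 0 else (3 : ℝ) ^ (-((sInf {n : ℕ | i n ≠ j n} : ℕ) : ℤ))

/-- The middle-`(1-2λ)` Cantor set `C_λ`. -/
def Cset (l : ℝ) : Set ℝ :=
  {x | ∃ i : ℕ → ℝ, (∀ n, i n = 0 ∨ i n = 1) ∧ x = (1 - l) * ∑' n : ℕ, i n * l ^ n}

/-- `Λ(t) = {λ ∈ (0,1/3] : t ∈ C_λ - C_λ}`. -/
def Lam (t : ℝ) : Set ℝ := {l | l ∈ Set.Ioc (0 : ℝ) (1/3) ∧ t ∈ Cset l - Cset l}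

lemma coding_bounds {i : ℕ → ℝ} (hi : IsCoding i) (n : ℕ) : -1 ≤ i n ∧ i n ≤ 1 := by
  rcases hi n with h | h | h <;> rw [h] <;> norm_num

lemma sum_coding {i : ℕ → ℝ} (hi : IsCoding i) {l : ℝ} (h0 : 0 ≤ l) (h1 : l < 1) :
    Summable (fun n => i n * l ^ n) := by
  apply Summable.of_abs
  apply Summable.of_nonneg_of_le (fun n => abs_nonneg _) (fun n => ?_)
    (summable_geometric_of_lt_one h0 h1)
  rw [abs_mul, abs_pow, abs_of_nonneg h0]
  have habs : |i n| ≤ 1 := abs_le.mpr (coding_bounds hi n)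
  calc |i n| * l ^ n ≤ 1 * l ^ n :=
        mul_le_mul_of_nonneg_right habs (pow_nonneg h0 n)
    _ = l ^ n := one_mul _

lemma sum_tail {i : ℕ → ℝ} (hi : IsCoding i) (k : ℕ) {l : ℝ} (h0 : 0 ≤ l) (h1 : l < 1) :
    Summable (fun n => i (n + (k+1)) * ((1 - l) * l ^ (n + (k+1)))) := by
  have : Summable (fun n => i n * ((1 - l) * l ^ n)) := by
    have := (sum_coding hi h0 h1).mul_left (1 - l)
    apply this.congr
    intro n; ring
  exact (summable_nat_add_iff (f := fun n => i n * ((1 - l) * l ^ n)) (k+1)).mpr this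

lemma sum_tail_geo (k : ℕ) {l : ℝ} (h0 : 0 ≤ l) (h1 : l < 1) :
    Summable (fun n : ℕ => (1 - l) * l ^ (n + (k+1))) := by
  have : Summable (fun n : ℕ => ((1 - l) * l ^ (k+1)) * l ^ n) :=
    (summable_geometric_of_lt_one h0 h1).mul_left _
  apply this.congr
  intro n; rw [pow_add]; ring

lemma tail_geo_eq (k : ℕ) {l : ℝ} (h0 : 0 ≤ l) (h1 : l < 1) :
    ∑' n : ℕ, (1 - l) * l ^ (n + (k+1)) = l ^ (k+1) := by
  have he : ∀ n : ℕ, (1 - l) * l ^ (n + (k+1)) = ((1 - l) * l ^ (k+1)) * l ^ n := by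
    intro n; rw [pow_add]; ring
  rw [tsum_congr he, tsum_mul_left, tsum_geometric_of_lt_one h0 h1]
  rw [mul_comm (1-l) (l^(k+1)), mul_assoc, mul_inv_cancel₀ (by linarith), mul_one]

lemma PiFun_eq {i : ℕ → ℝ} (hi : IsCoding i) {k : ℕ}
    (h0 : ∀ n, n < k → i n = 0) (h1 : i k = 1) {l : ℝ} (hl0 : 0 ≤ l) (hl1 : l < 1) :
    PiFun i l = (1 - l) * l ^ k + ∑' n, i (n + (k+1)) * ((1 - l) * l ^ (n + (k+1))) := by
  have hs := sum_coding hi hl0 hl1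
  have hdecomp := Summable.sum_add_tsum_nat_add (f := fun n => i n * l ^ n) (k+1) hs
  unfold PiFun
  rw [← hdecomp]
  have hfin : ∑ n ∈ Finset.range (k+1), i n * l ^ n = l ^ k := by
    rw [Finset.sum_eq_single k]
    · rw [h1, one_mul]
    · intro n hn hne
      rw [h0 n (by simp at hn; omega), zero_mul]
    · intro h; exact absurd (Finset.self_mem_range_succ k) h
  rw [hfin, mul_add]
  congr 1
  rw [← tsum_mul_left]
  exact tsum_congr fun n => by ring

lemma gterm_mono {a b : ℝ} (ha : 0 ≤ a) (hab : a ≤ b) (hb : b ≤ 1/2) (m : ℕ) :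
    (1 - a) * a ^ (m + 1) ≤ (1 - b) * b ^ (m + 1) := by
  have h1 : (1 - a) * a ≤ (1 - b) * b := by nlinarith
  have h2 : a ^ m ≤ b ^ m := pow_le_pow_left₀ ha hab m
  have h3 : (0:ℝ) ≤ (1 - a) * a := by nlinarith
  have h4 : (0:ℝ) ≤ a ^ m := pow_nonneg ha m
  calc (1 - a) * a ^ (m + 1) = ((1 - a) * a) * a ^ m := by rw [pow_succ]; ring
    _ ≤ ((1 - b) * b) * b ^ m := by
        apply mul_le_mul h1 h2 h4 (by nlinarith)
    _ = (1 - b) * b ^ (m + 1) := by rw [pow_succ]; ring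

lemma poly_mono {k : ℕ} (hk : 2 ≤ k) :
    StrictMonoOn (fun x : ℝ => x ^ k - 2 * x ^ (k+1)) (Set.Icc (0:ℝ) (1/3)) := by
  apply strictMonoOn_of_deriv_pos (convex_Icc _ _)
  · fun_prop
  · intro x hx
    rw [interior_Icc, Set.mem_Ioo] at hx
    obtain ⟨j, rfl⟩ : ∃ j, k = j + 2 := ⟨k - 2, by omega⟩
    have hd : HasDerivAt (fun x : ℝ => x ^ (j+2) - 2 * x ^ (j+2+1))
        ((j+2 : ℕ) * x ^ (j+1) - 2 * ((j+2+1 : ℕ) * x ^ (j+2))) x := by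
      have := (hasDerivAt_pow (j+2) x).sub ((hasDerivAt_pow (j+2+1) x).const_mul 2)
      exact this.congr_deriv (by simp)
    rw [hd.deriv]
    have hx1 : (0:ℝ) < x := hx.1
    have hx3 : x < 1/3 := hx.2
    have hpow : 0 < x ^ (j+1) := pow_pos hx1 _
    have hxe : x ^ (j+2) = x ^ (j+1) * x := by ring
    rw [hxe]
    push_cast
    nlinarith [mul_pos hpow hx1, mul_lt_mul_of_pos_left hx3 hpow]

theorem stmt5 (i : ℕ → ℝ) (hi : IsCoding i) (k : ℕ) (hk : 2 ≤ k)
    (h0 : ∀ n, n < k → i n = 0) (h1 : i k = 1) :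
    StrictMonoOn (fun l => PiFun i l) (Set.Ioc (0 : ℝ) (1/3)) := by
  intro a ha b hb hab
  obtain ⟨ha0, ha3⟩ := ha
  obtain ⟨hb0, hb3⟩ := hb
  have ha1 : a < 1 := by linarith
  have hb1 : b < 1 := by linarith
  simp only []
  rw [PiFun_eq hi h0 h1 ha0.le ha1, PiFun_eq hi h0 h1 hb0.le hb1]
  set Fa : ℕ → ℝ := fun n => i (n + (k+1)) * ((1 - a) * a ^ (n + (k+1))) with hFa
  set Fb : ℕ → ℝ := fun n => i (n + (k+1)) * ((1 - b) * b ^ (n + (k+1))) with hFb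
  have hSa : Summable Fa := sum_tail hi k ha0.le ha1
  have hSb : Summable Fb := sum_tail hi k hb0.le hb1
  have hSGa : Summable (fun n : ℕ => (1 - a) * a ^ (n + (k+1))) := sum_tail_geo k ha0.le ha1
  have hSGb : Summable (fun n : ℕ => (1 - b) * b ^ (n + (k+1))) := sum_tail_geo k hb0.le hb1
  -- termwise lower bound
  have hptwise : ∀ n : ℕ,
      -((1 - b) * b ^ (n + (k+1)) - (1 - a) * a ^ (n + (k+1))) ≤ Fb n - Fa n := by
    intro n
    have hG : (1 - a) * a ^ (n + (k+1)) ≤ (1 - b) * b ^ (n + (k+1)) := by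
      have : n + (k+1) = (n + k) + 1 := by omega
      rw [this]
      exact gterm_mono ha0.le hab.le (by linarith) (n + k)
    have hc := coding_bounds hi (n + (k+1))
    have heq : Fb n - Fa n
        = i (n + (k+1)) * ((1 - b) * b ^ (n + (k+1)) - (1 - a) * a ^ (n + (k+1))) := by
      rw [hFa, hFb]; ring
    rw [heq]
    nlinarith [hc.1, hG]
  have hsumineq :
      ∑' n, -((1 - b) * b ^ (n + (k+1)) - (1 - a) * a ^ (n + (k+1)))
        ≤ ∑' n, (Fb n - Fa n) :=
    Summable.tsum_le_tsum hptwise ((hSGb.sub hSGa).neg) (hSb.sub hSa)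
  have hL : ∑' n, -((1 - b) * b ^ (n + (k+1)) - (1 - a) * a ^ (n + (k+1)))
      = -(b ^ (k+1) - a ^ (k+1)) := by
    rw [tsum_neg, Summable.tsum_sub hSGb hSGa, tail_geo_eq k hb0.le hb1, tail_geo_eq k ha0.le ha1]
  have hR : ∑' n, (Fb n - Fa n) = (∑' n, Fb n) - ∑' n, Fa n := Summable.tsum_sub hSb hSa
  rw [hL, hR] at hsumineq
  -- final polynomial inequality
  have hpoly : a ^ k - 2 * a ^ (k+1) < b ^ k - 2 * b ^ (k+1) :=
    poly_mono hk ⟨ha0.le, ha3⟩ ⟨(ha0.trans hab).le, hb3⟩ hab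
  have ea : (1 - a) * a ^ k = a ^ k - a ^ (k+1) := by rw [pow_succ]; ring
  have eb : (1 - b) * b ^ k = b ^ k - b ^ (k+1) := by rw [pow_succ]; ring
  rw [ea, eb]
  linarith [hsumineq, hpoly]
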